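/- Let N be odd with prime factorization N = p₁^α₁ ⋯ p_m^α_m (m distinct odd primes, m ≥ 2). The probability that a uniformly random a coprime to N, 1 ≤ a ≤ N-1, has order r modulo N that is even and satisfies a^(r/2) ≢ -1 (mod N), is at least 1 - 1/2^(m-1). -/

import Mathlib

open Finset

namespace ShorAux

/-- Units of a pi monoid are the pi of the units. -/
def piUnits {ι : Type*} {M : ι → Type*} [∀ i, Monoid (M i)] :
    (∀ i, M i)ˣ ≃* ∀ i, (M i)ˣ where
  toFun u i := ⟨u.val i, u.inv i, congrFun u.val_inv i, congrFun u.inv_val i⟩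
  invFun x := ⟨fun i => (x i : M i), fun i => ((x i)⁻¹ : (M i)ˣ),
    funext fun i => (x i).mul_inv, funext fun i => (x i).inv_mul⟩
  left_inv u := Units.ext rfl
  right_inv x := funext fun i => Units.ext rfl
  map_mul' u v := funext fun i => Units.ext rfl

lemma orderOf_pi {ι : Type*} [Fintype ι] {M : ι → Type*} [∀ i, Group (M i)]
    (x : ∀ i, M i) : orderOf x = univ.lcm fun i => orderOf (x i) := by
  apply Nat.dvd_antisymm
  · rw [orderOf_dvd_iff_pow_eq_one]
    funext i
    show x i ^ (univ.lcm fun i => orderOf (x i)) = 1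
    exact orderOf_dvd_iff_pow_eq_one.mp (Finset.dvd_lcm (mem_univ i))
  · apply Finset.lcm_dvd
    intro i _
    rw [orderOf_dvd_iff_pow_eq_one]
    have h := pow_orderOf_eq_one x
    calc x i ^ orderOf x = (x ^ orderOf x) i := rfl
      _ = 1 := by rw [h]; rfl

lemma sq_fiber_card_le {G : Type*} [CommGroup G] [Fintype G] [DecidableEq G]
    (τ : G) (hsq : ∀ x : G, x ^ 2 = 1 → x = 1 ∨ x = τ) (s : ℕ) :
    (univ.filter fun x : G => x ^ (2 * s) = 1).card ≤
      2 * (univ.filter fun x : G => x ^ s = 1).card := by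
  set B2 := univ.filter fun x : G => x ^ (2 * s) = 1 with hB2
  have key : B2.card ≤ 2 * (B2.image fun x => x ^ 2).card := by
    apply Finset.card_le_mul_card_image
    intro b _
    rcases (B2.filter fun a => a ^ 2 = b).eq_empty_or_nonempty with h | ⟨x0, hx0⟩
    · simp [h]
    · have hsub : (B2.filter fun a => a ^ 2 = b) ⊆ {x0, τ * x0} := by
        intro y hy
        simp only [mem_filter] at hy hx0
        have h1 : (y * x0⁻¹) ^ 2 = 1 := by
          rw [mul_pow, inv_pow, hy.2, hx0.2, mul_inv_cancel]
        rcases hsq _ h1 with h2 | h2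
        · have : y = x0 := by
            have := mul_inv_eq_one.mp h2; exact this
          simp [this]
        · have : y = τ * x0 := by
            rw [← h2]; group
          simp [this]
      calc (B2.filter fun a => a ^ 2 = b).card ≤ ({x0, τ * x0} : Finset G).card :=
            Finset.card_le_card hsub
        _ ≤ 2 := by
            apply (Finset.card_insert_le _ _).trans
            simp
  refine key.trans (Nat.mul_le_mul_left 2 ?_)
  apply Finset.card_le_card
  intro b hb
  obtain ⟨x, hx, rfl⟩ := mem_image.mp hb
  simp only [hB2, mem_filter, mem_univ, true_and] at hx ⊢
  rw [← pow_mul]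
  exact hx

lemma component_count {G : Type*} [CommGroup G] [Fintype G] [DecidableEq G]
    (τ : G) (hsq : ∀ x : G, x ^ 2 = 1 → x = 1 ∨ x = τ)
    (heven : 2 ∣ Fintype.card G) (k : ℕ) :
    2 * (univ.filter fun x : G => (orderOf x).factorization 2 = k).card
      ≤ Fintype.card G := by
  have hn0 : Fintype.card G ≠ 0 := Fintype.card_ne_zero
  set n := Fintype.card G with hn
  set u := n / 2 ^ (n.factorization 2) with hu
  have hu_odd : ¬ 2 ∣ u := Nat.not_dvd_ordCompl Nat.prime_two hn0
  have hu0 : u ≠ 0 := (Nat.ordCompl_pos 2 hn0).ne'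
  cases k with
  | zero =>
    have hsub : (univ.filter fun x : G => (orderOf x).factorization 2 = 0)
        ⊆ univ.filter fun x : G => x ^ u = 1 := by
      intro x hx
      simp only [mem_filter, mem_univ, true_and] at hx ⊢
      rw [← orderOf_dvd_iff_pow_eq_one]
      have hord : orderOf x ∣ n := orderOf_dvd_card
      have hodd : ¬ 2 ∣ orderOf x := by
        intro h
        have := Nat.Prime.factorization_pos_of_dvd Nat.prime_two
          (orderOf_pos x).ne' h
        omega
      have hdv : orderOf x ∣ 2 ^ (n.factorization 2) * u := by
        rwa [hu, Nat.ordProj_mul_ordCompl_eq_self n 2]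
      exact Nat.Coprime.dvd_of_dvd_mul_left
        (Nat.Coprime.pow_right _
          ((Nat.Prime.coprime_iff_not_dvd Nat.prime_two).mpr hodd).symm) hdv
    have hBu : 2 * (univ.filter fun x : G => x ^ u = 1).card ≤ n := by
      have hcard : (univ.filter fun x : G => x ^ u = 1).card
          = Nat.card (MonoidHom.ker (powMonoidHom u : G →* G)) := by
        rw [← Fintype.card_subtype, Nat.card_eq_fintype_card]
        apply Fintype.card_congr
        exact Equiv.subtypeEquivRight fun x => by
          simp [MonoidHom.mem_ker, powMonoidHom_apply]
      have hdvd : Nat.card (MonoidHom.ker (powMonoidHom u : G →* G)) ∣ n := by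
        have := Subgroup.card_subgroup_dvd_card
          (MonoidHom.ker (powMonoidHom u : G →* G))
        rwa [Nat.card_eq_fintype_card (α := G)] at this
      have hodd : ¬ 2 ∣ Nat.card (MonoidHom.ker (powMonoidHom u : G →* G)) := by
        intro h2
        haveI : Fact (Nat.Prime 2) := ⟨Nat.prime_two⟩
        rw [Nat.card_eq_fintype_card] at h2
        obtain ⟨y, hy⟩ := exists_prime_orderOf_dvd_card
          (G := MonoidHom.ker (powMonoidHom u : G →* G)) 2 h2
        have hyG : orderOf (y : G) = 2 := by rw [Subgroup.orderOf_coe]; exact hy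
        have hyk : (y : G) ^ u = 1 := by
          have := y.2
          rwa [MonoidHom.mem_ker, powMonoidHom_apply] at this
        have : 2 ∣ u := hyG ▸ orderOf_dvd_iff_pow_eq_one.mpr hyk
        exact hu_odd this
      obtain ⟨c, hc⟩ := hdvd
      have hc2 : 2 ≤ c := by
        rcases Nat.lt_or_ge c 2 with h | h
        · interval_cases c
          · simp [hc] at hn0
          · rw [hc, mul_one] at heven; exact absurd heven hodd
        · exact h
      rw [hcard, hc]
      calc 2 * Nat.card (MonoidHom.ker (powMonoidHom u : G →* G))
          ≤ c * Nat.card (MonoidHom.ker (powMonoidHom u : G →* G)) :=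
            Nat.mul_le_mul_right _ hc2
        _ = Nat.card (MonoidHom.ker (powMonoidHom u : G →* G)) * c := mul_comm _ _
    calc 2 * (univ.filter fun x : G => (orderOf x).factorization 2 = 0).card
        ≤ 2 * (univ.filter fun x : G => x ^ u = 1).card :=
          Nat.mul_le_mul_left 2 (Finset.card_le_card hsub)
      _ ≤ n := hBu
  | succ j =>
    set s := 2 ^ j * u with hs
    have hsfact : s.factorization 2 = j := by
      rw [hs, Nat.factorization_mul (pow_ne_zero _ two_ne_zero) hu0,
        Nat.Prime.factorization_pow Nat.prime_two]
      simp [Nat.factorization_eq_zero_of_not_dvd hu_odd]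
    have hsub : (univ.filter fun x : G => (orderOf x).factorization 2 = j + 1)
        ⊆ (univ.filter fun x : G => x ^ (2 * s) = 1)
          \ (univ.filter fun x : G => x ^ s = 1) := by
      intro x hx
      simp only [mem_filter, mem_univ, true_and] at hx
      have hord0 : orderOf x ≠ 0 := (orderOf_pos x).ne'
      rw [mem_sdiff]
      constructor
      · simp only [mem_filter, mem_univ, true_and]
        rw [← orderOf_dvd_iff_pow_eq_one]
        have h1 : orderOf x = 2 ^ (j + 1) *
            (orderOf x / 2 ^ ((orderOf x).factorization 2)) := by
          conv_lhs => rw [← Nat.ordProj_mul_ordCompl_eq_self (orderOf x) 2]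
          rw [hx]
        have h2 : orderOf x / 2 ^ ((orderOf x).factorization 2) ∣ u :=
          Nat.ordCompl_dvd_ordCompl_of_dvd orderOf_dvd_card 2
        rw [h1]
        have : (2 : ℕ) * s = 2 ^ (j + 1) * u := by rw [hs]; ring
        rw [this]
        exact Nat.mul_dvd_mul_left _ h2
      · simp only [mem_filter, mem_univ, true_and]
        intro hpow
        have hds : orderOf x ∣ s := orderOf_dvd_iff_pow_eq_one.mpr hpow
        have hle := (Nat.factorization_le_iff_dvd hord0
          (by positivity)).mpr hds
        have := hle 2
        rw [hx, hsfact] at this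
        omega
    have hBsub : (univ.filter fun x : G => x ^ s = 1)
        ⊆ (univ.filter fun x : G => x ^ (2 * s) = 1) := by
      intro x hx
      simp only [mem_filter, mem_univ, true_and] at hx ⊢
      rw [mul_comm, pow_mul, hx, one_pow]
    have hS := Finset.card_le_card hsub
    rw [Finset.card_sdiff_of_subset hBsub] at hS
    have hq := sq_fiber_card_le τ hsq s
    have hB2n : (univ.filter fun x : G => x ^ (2 * s) = 1).card ≤ n := by
      rw [hn, ← Finset.card_univ]; exact Finset.card_filter_le _ _
    omega

lemma prod_bad_count (m : ℕ) (hm : 1 ≤ m) (G : Fin m → Type*)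
    [∀ i, CommGroup (G i)] [∀ i, Fintype (G i)] [∀ i, DecidableEq (G i)]
    (hcomp : ∀ i k,
      2 * (univ.filter fun x : G i => (orderOf x).factorization 2 = k).card
        ≤ Fintype.card (G i)) :
    2 ^ (m - 1) * (univ.filter fun x : ∀ i, G i =>
        ∀ i j, (orderOf (x i)).factorization 2 = (orderOf (x j)).factorization 2).card
      ≤ Fintype.card (∀ i, G i) := by
  classical
  set z : Fin m := ⟨0, hm⟩ with hz
  set K := Fintype.card (G z) with hK
  set c : Fin m → ℕ → ℕ := fun i k =>
    (univ.filter fun x : G i => (orderOf x).factorization 2 = k).card with hc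
  have hmem : ∀ i (y : G i), (orderOf y).factorization 2 ∈ Finset.range (Fintype.card (G i)) := by
    intro i y
    rw [Finset.mem_range]
    calc (orderOf y).factorization 2 < orderOf y :=
          Nat.factorization_lt 2 (orderOf_pos y).ne'
      _ ≤ Fintype.card (G i) := Nat.le_of_dvd Fintype.card_pos orderOf_dvd_card
  have hsub : (univ.filter fun x : ∀ i, G i =>
      ∀ i j, (orderOf (x i)).factorization 2 = (orderOf (x j)).factorization 2)
      ⊆ (Finset.range K).biUnion (fun k =>
          Fintype.piFinset fun i =>
            univ.filter fun y : G i => (orderOf y).factorization 2 = k) := by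
    intro x hx
    simp only [mem_filter, mem_univ, true_and] at hx
    rw [Finset.mem_biUnion]
    refine ⟨(orderOf (x z)).factorization 2, hmem z (x z), ?_⟩
    rw [Fintype.mem_piFinset]
    intro i
    simp only [mem_filter, mem_univ, true_and]
    exact hx i z
  have hcount : (univ.filter fun x : ∀ i, G i =>
      ∀ i j, (orderOf (x i)).factorization 2 = (orderOf (x j)).factorization 2).card
      ≤ ∑ k ∈ Finset.range K, ∏ i, c i k := by
    refine (Finset.card_le_card hsub).trans ?_
    refine (Finset.card_biUnion_le).trans ?_
    apply Finset.sum_le_sum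
    intro k _
    rw [Fintype.card_piFinset]
  have hsumz : ∑ k ∈ Finset.range K, c z k = Fintype.card (G z) := by
    rw [← Finset.card_univ (α := G z)]
    exact (Finset.card_eq_sum_card_fiberwise (fun y _ => hmem z y)).symm
  have hcardm : (univ.erase z).card = m - 1 := by
    rw [Finset.card_erase_of_mem (mem_univ z), Finset.card_univ, Fintype.card_fin]
  calc 2 ^ (m - 1) * (univ.filter fun x : ∀ i, G i =>
        ∀ i j, (orderOf (x i)).factorization 2 = (orderOf (x j)).factorization 2).card
      ≤ 2 ^ (m - 1) * ∑ k ∈ Finset.range K, ∏ i, c i k :=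
        Nat.mul_le_mul_left _ hcount
    _ = ∑ k ∈ Finset.range K, c z k * ∏ i ∈ univ.erase z, (2 * c i k) := by
        rw [Finset.mul_sum]
        congr 1
        funext k
        rw [Finset.prod_mul_distrib, Finset.prod_const, hcardm,
          ← Finset.mul_prod_erase univ (fun i => c i k) (mem_univ z)]
        ring
    _ ≤ ∑ k ∈ Finset.range K, c z k * ∏ i ∈ univ.erase z, Fintype.card (G i) := by
        apply Finset.sum_le_sum
        intro k _
        apply Nat.mul_le_mul_left
        apply Finset.prod_le_prod'
        intro i _
        exact hcomp i k
    _ = (∑ k ∈ Finset.range K, c z k) * ∏ i ∈ univ.erase z, Fintype.card (G i) := by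
        rw [Finset.sum_mul]
    _ = Fintype.card (G z) * ∏ i ∈ univ.erase z, Fintype.card (G i) := by rw [hsumz]
    _ = ∏ i, Fintype.card (G i) :=
        Finset.mul_prod_erase univ (fun i => Fintype.card (G i)) (mem_univ z)
    _ = Fintype.card (∀ i, G i) := Fintype.card_pi.symm

lemma two_mul_dvd_iff {d r : ℕ} (hd : d ≠ 0) (hr : r ≠ 0) (hdr : d ∣ r) :
    2 * d ∣ r ↔ d.factorization 2 < r.factorization 2 := by
  constructor
  · intro h
    have h2d : 2 * d ≠ 0 := by omega
    have hle := (Nat.factorization_le_iff_dvd h2d hr).mpr h 2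
    rw [Nat.factorization_mul two_ne_zero hd] at hle
    have h2 : (Nat.factorization 2) 2 = 1 :=
      Nat.Prime.factorization_self Nat.prime_two
    simp only [Finsupp.coe_add, Pi.add_apply] at hle
    omega
  · intro h
    have ht : d / 2 ^ (d.factorization 2) ∣ r / 2 ^ (r.factorization 2) :=
      Nat.ordCompl_dvd_ordCompl_of_dvd hdr 2
    have key : 2 * d = 2 ^ (d.factorization 2 + 1) * (d / 2 ^ (d.factorization 2)) := by
      conv_lhs => rw [← Nat.ordProj_mul_ordCompl_eq_self d 2]
      ring
    rw [key]
    conv_rhs => rw [← Nat.ordProj_mul_ordCompl_eq_self r 2]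
    exact Nat.mul_dvd_mul (pow_dvd_pow 2 (by omega)) ht

lemma zmod_sq_eq_one {q αq : ℕ} (hq : q.Prime) (hoddq : Odd q) (_hα : 1 ≤ αq)
    (x : ZMod (q ^ αq)) (hx : x ^ 2 = 1) : x = 1 ∨ x = -1 := by
  haveI : NeZero (q ^ αq) := ⟨pow_ne_zero _ hq.pos.ne'⟩
  set v : ℤ := (x.val : ℤ) with hv
  have hxv : ((v : ℤ) : ZMod (q ^ αq)) = x := by
    rw [hv]
    push_cast
    exact ZMod.natCast_rightInverse x
  have hdvd : ((q : ℤ) ^ αq) ∣ (v - 1) * (v + 1) := by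
    have h0 : (((v - 1) * (v + 1) : ℤ) : ZMod (q ^ αq)) = 0 := by
      push_cast [hxv]
      linear_combination hx
    rw [ZMod.intCast_zmod_eq_zero_iff_dvd] at h0
    rwa [Nat.cast_pow] at h0
  have hqZ : Prime (q : ℤ) := Nat.prime_iff_prime_int.mp hq
  have hq2 : ¬ ((q : ℤ) ∣ (v - 1)) ∨ ¬ ((q : ℤ) ∣ (v + 1)) := by
    by_contra h
    push_neg at h
    have h2 : (q : ℤ) ∣ 2 := by
      have := dvd_sub h.2 h.1
      simpa using this
    obtain ⟨t, ht⟩ := hoddq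
    have h2' : q ∣ 2 := by exact_mod_cast h2
    have h2le := Nat.le_of_dvd (by norm_num) h2'
    have := hq.two_le
    omega
  rcases hq2 with h | h
  · have hcop : IsCoprime ((q : ℤ) ^ αq) (v - 1) :=
      IsCoprime.pow_left (hqZ.coprime_iff_not_dvd.mpr h)
    have hdv : ((q : ℤ) ^ αq) ∣ (v + 1) := hcop.dvd_of_dvd_mul_left hdvd
    right
    have h0 : ((v + 1 : ℤ) : ZMod (q ^ αq)) = 0 := by
      rw [ZMod.intCast_zmod_eq_zero_iff_dvd]
      rwa [Nat.cast_pow]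
    push_cast [hxv] at h0
    exact eq_neg_of_add_eq_zero_left h0
  · have hcop : IsCoprime ((q : ℤ) ^ αq) (v + 1) :=
      IsCoprime.pow_left (hqZ.coprime_iff_not_dvd.mpr h)
    have hdv : ((q : ℤ) ^ αq) ∣ (v - 1) := hcop.dvd_of_dvd_mul_right hdvd
    left
    have h0 : ((v - 1 : ℤ) : ZMod (q ^ αq)) = 0 := by
      rw [ZMod.intCast_zmod_eq_zero_iff_dvd]
      rwa [Nat.cast_pow]
    push_cast [hxv] at h0
    exact sub_eq_zero.mp h0

end ShorAux

theorem shor_good_a_probability (m : ℕ) (hm : 2 ≤ m)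
    (p : Fin m → ℕ) (α : Fin m → ℕ)
    (hp : ∀ i, (p i).Prime) (hodd : ∀ i, Odd (p i)) (hα : ∀ i, 1 ≤ α i)
    (hinj : Function.Injective p)
    (N : ℕ) (hN : N = ∏ i, p i ^ α i) :
    ((Nat.card {a : (ZMod N)ˣ //
        Even (orderOf a) ∧ ((a : ZMod N)) ^ (orderOf a / 2) ≠ -1} : ℚ)
      / (Nat.card (ZMod N)ˣ : ℚ)) ≥ 1 - 1 / 2 ^ (m - 1) := by
  classical
  subst hN
  have hp3 : ∀ i, 3 ≤ p i := by
    intro i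
    have h2 := (hp i).two_le
    obtain ⟨t, ht⟩ := hodd i
    omega
  have hQ1 : ∀ i, 1 < p i ^ α i := fun i =>
    Nat.one_lt_pow (by have := hα i; omega) (by have := hp3 i; omega)
  have hQ2 : ∀ i, 2 < p i ^ α i := fun i =>
    lt_of_lt_of_le (by have := hp3 i; omega) (Nat.le_self_pow (by have := hα i; omega) _)
  haveI instNZ : ∀ i, NeZero (p i ^ α i) := fun i => ⟨by have := hQ1 i; omega⟩
  haveI : NeZero (∏ i, p i ^ α i) :=
    ⟨(Finset.prod_pos fun i _ => by have := hQ1 i; omega).ne'⟩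
  haveI instF2 : ∀ i, Fact (2 < p i ^ α i) := fun i => ⟨hQ2 i⟩
  have hcop : Pairwise (Function.onFun Nat.Coprime fun i => p i ^ α i) := by
    intro i j hij
    exact Nat.Coprime.pow _ _ ((Nat.coprime_primes (hp i) (hp j)).mpr fun h => hij (hinj h))
  set φ := ZMod.prodEquivPi (fun i => p i ^ α i) hcop with hφ
  set e : (ZMod (∏ i, p i ^ α i))ˣ ≃* ∀ i, (ZMod (p i ^ α i))ˣ :=
    (Units.mapEquiv φ.toMulEquiv).trans ShorAux.piUnits with he
  have hcoe : ∀ (a : (ZMod (∏ i, p i ^ α i))ˣ) (i),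
      ((e a i : ZMod (p i ^ α i))) = φ (a : ZMod (∏ i, p i ^ α i)) i := fun a i => rfl
  have horder : ∀ a : (ZMod (∏ i, p i ^ α i))ˣ,
      orderOf a = univ.lcm fun i => orderOf (e a i) := by
    intro a
    rw [← ShorAux.orderOf_pi (e a), MulEquiv.orderOf_eq]
  have key : ∀ a : (ZMod (∏ i, p i ^ α i))ˣ,
      ((∀ i j : Fin m, (orderOf (e a i)).factorization 2
          = (orderOf (e a j)).factorization 2)
        ↔ (¬ Even (orderOf a)
            ∨ ((a : ZMod (∏ i, p i ^ α i))) ^ (orderOf a / 2) = -1)) := by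
    intro a
    set r := orderOf a with hr
    set R : Fin m → ℕ := fun i => orderOf (e a i) with hR
    have hr0 : r ≠ 0 := (orderOf_pos a).ne'
    have hR0 : ∀ i, R i ≠ 0 := fun i => (orderOf_pos (e a i)).ne'
    have hRr : ∀ i, R i ∣ r := by
      intro i
      rw [hr, horder a]
      exact Finset.dvd_lcm (mem_univ i)
    have hvle : ∀ i, (R i).factorization 2 ≤ r.factorization 2 := fun i =>
      (Nat.factorization_le_iff_dvd (hR0 i) hr0).mpr (hRr i) 2
    have hcoeneg : ∀ s : ℕ, (((a : ZMod (∏ i, p i ^ α i))) ^ s = -1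
        ↔ ∀ i, (e a i) ^ s = -1) := by
      intro s
      constructor
      · intro h i
        apply Units.ext
        have h' := congrArg (fun z => φ z i) h
        simp only [map_pow, map_neg, map_one] at h'
        rw [Units.val_pow_eq_pow_val, hcoe a i]
        simpa using h'
      · intro h
        apply φ.injective
        funext i
        have h' := congrArg (Units.val) (h i)
        rw [Units.val_pow_eq_pow_val, hcoe a i] at h'
        simp only [map_pow, map_neg, map_one]
        simpa using h'
    have husq : ∀ (i : Fin m) (b : (ZMod (p i ^ α i))ˣ),
        b ^ 2 = 1 → b = 1 ∨ b = -1 := by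
      intro i b hb
      have hb' : (b : ZMod (p i ^ α i)) ^ 2 = 1 := by
        rw [← Units.val_pow_eq_pow_val, hb, Units.val_one]
      rcases ShorAux.zmod_sq_eq_one (hp i) (hodd i) (hα i) _ hb' with h | h
      · left; exact Units.ext (by simpa using h)
      · right; exact Units.ext (by simpa using h)
    have hne1 : ∀ i : Fin m, (-1 : (ZMod (p i ^ α i))ˣ) ≠ 1 := by
      intro i h
      have h' := congrArg (Units.val) h
      simp only [Units.val_neg, Units.val_one] at h'
      exact ZMod.neg_one_ne_one h'
    have hbiff : ∀ i : Fin m, Even r → ((e a i) ^ (r / 2) = -1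
        ↔ (R i).factorization 2 = r.factorization 2) := by
      intro i hEven
      have h2r : 2 ∣ r := hEven.two_dvd
      have hbsq : ((e a i) ^ (r / 2)) ^ 2 = 1 := by
        rw [← pow_mul, Nat.div_mul_cancel h2r]
        exact orderOf_dvd_iff_pow_eq_one.mp (hRr i)
      have hb1 : ((e a i) ^ (r / 2) = 1)
          ↔ (R i).factorization 2 < r.factorization 2 := by
        rw [← orderOf_dvd_iff_pow_eq_one]
        constructor
        · intro h
          apply (ShorAux.two_mul_dvd_iff (hR0 i) hr0 (hRr i)).mp
          have h2 : 2 * R i ∣ 2 * (r / 2) := Nat.mul_dvd_mul_left 2 h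
          rwa [Nat.mul_div_cancel' h2r] at h2
        · intro h
          have h2 := (ShorAux.two_mul_dvd_iff (hR0 i) hr0 (hRr i)).mpr h
          rw [← Nat.mul_div_cancel' h2r] at h2
          exact (mul_dvd_mul_iff_left (by norm_num : (2:ℕ) ≠ 0)).mp h2
      constructor
      · intro h
        have hne : (e a i) ^ (r / 2) ≠ 1 := by rw [h]; exact hne1 i
        have hle := hvle i
        rcases Nat.lt_or_ge ((R i).factorization 2) (r.factorization 2) with hlt | hge
        · exact absurd (hb1.mpr hlt) hne
        · omega
      · intro h
        rcases husq i _ hbsq with h1 | h1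
        · exfalso
          have := hb1.mp h1
          omega
        · exact h1
    constructor
    · intro hall
      by_cases hEven : Even r
      · right
        rw [hcoeneg]
        intro i
        rw [hbiff i hEven]
        refine le_antisymm (hvle i) ?_
        set U := ∏ j, (R j) / 2 ^ ((R j).factorization 2) with hU
        have hU0 : U ≠ 0 := by
          rw [hU]
          exact (Finset.prod_pos fun j _ => Nat.ordCompl_pos 2 (hR0 j)).ne'
        have hUv : U.factorization 2 = 0 := by
          apply Nat.factorization_eq_zero_of_not_dvd
          rw [hU]
          intro hdv
          obtain ⟨j, _, hj⟩ := (Nat.prime_two.prime.dvd_finset_prod_iff _).mp hdv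
          exact Nat.not_dvd_ordCompl Nat.prime_two (hR0 j) hj
        have hdvdall : ∀ j, R j ∣ 2 ^ ((R i).factorization 2) * U := by
          intro j
          have h1 : R j / 2 ^ ((R j).factorization 2) ∣ U :=
            Finset.dvd_prod_of_mem _ (mem_univ j)
          calc R j = 2 ^ ((R j).factorization 2)
                * (R j / 2 ^ ((R j).factorization 2)) :=
              (Nat.ordProj_mul_ordCompl_eq_self (R j) 2).symm
            _ ∣ 2 ^ ((R i).factorization 2) * U :=
              mul_dvd_mul (pow_dvd_pow 2 (le_of_eq (hall j i))) h1
        have hlcm : r ∣ 2 ^ ((R i).factorization 2) * U := by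
          rw [hr, horder a]
          exact Finset.lcm_dvd fun j _ => hdvdall j
        have hfin := (Nat.factorization_le_iff_dvd hr0 (by positivity)).mpr hlcm 2
        have hcompute : (2 ^ ((R i).factorization 2) * U).factorization 2
            = (R i).factorization 2 := by
          rw [Nat.factorization_mul (pow_ne_zero _ two_ne_zero) hU0,
            Nat.Prime.factorization_pow Nat.prime_two]
          simp [hUv]
        rwa [hcompute] at hfin
      · exact Or.inl hEven
    · intro h i j
      by_cases hEven : Even r
      · rcases h with hodd' | hpow
        · exact absurd hEven hodd'
        · rw [hcoeneg] at hpow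
          rw [(hbiff i hEven).mp (hpow i), (hbiff j hEven).mp (hpow j)]
      · have hz : ∀ k, (R k).factorization 2 = 0 := by
          intro k
          apply Nat.factorization_eq_zero_of_not_dvd
          intro h2
          exact hEven (even_iff_two_dvd.mpr (h2.trans (hRr k)))
        rw [hz i, hz j]
  have hcomp : ∀ (i : Fin m) (k : ℕ),
      2 * (univ.filter fun x : (ZMod (p i ^ α i))ˣ =>
        (orderOf x).factorization 2 = k).card ≤ Fintype.card (ZMod (p i ^ α i))ˣ := by
    intro i k
    apply ShorAux.component_count (-1 : (ZMod (p i ^ α i))ˣ)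
    · intro x hx
      have hx' : (x : ZMod (p i ^ α i)) ^ 2 = 1 := by
        rw [← Units.val_pow_eq_pow_val, hx, Units.val_one]
      rcases ShorAux.zmod_sq_eq_one (hp i) (hodd i) (hα i) _ hx' with h | h
      · left; exact Units.ext (by simpa using h)
      · right; exact Units.ext (by simpa using h)
    · rw [ZMod.card_units_eq_totient]
      exact (Nat.totient_even (hQ2 i)).two_dvd
  have hprod := ShorAux.prod_bad_count m (by omega)
    (fun i => (ZMod (p i ^ α i))ˣ) hcomp
  set badP : (ZMod (∏ i, p i ^ α i))ˣ → Prop := fun a =>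
    ∀ i j : Fin m, (orderOf (e a i)).factorization 2
      = (orderOf (e a j)).factorization 2 with hbadP
  have hcardeq : (univ.filter badP).card
      = (univ.filter fun x : ∀ i, (ZMod (p i ^ α i))ˣ =>
          ∀ i j, (orderOf (x i)).factorization 2
            = (orderOf (x j)).factorization 2).card := by
    apply Finset.card_bij (fun a _ => e a)
    · intro a ha
      simp only [mem_filter, mem_univ, true_and] at ha ⊢
      exact ha
    · intro a _ b _ hab
      exact e.injective hab
    · intro x hx
      refine ⟨e.symm x, ?_, e.apply_symm_apply x⟩
      simp only [mem_filter, mem_univ, true_and] at hx ⊢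
      show ∀ i j, (orderOf (e (e.symm x) i)).factorization 2
        = (orderOf (e (e.symm x) j)).factorization 2
      simp only [e.apply_symm_apply]
      exact hx
  have hcardG : Fintype.card (ZMod (∏ i, p i ^ α i))ˣ
      = Fintype.card (∀ i, (ZMod (p i ^ α i))ˣ) := Fintype.card_congr e.toEquiv
  have hgood : Nat.card {a : (ZMod (∏ i, p i ^ α i))ˣ //
        Even (orderOf a) ∧ ((a : ZMod (∏ i, p i ^ α i))) ^ (orderOf a / 2) ≠ -1}
      = Fintype.card (ZMod (∏ i, p i ^ α i))ˣ - (univ.filter badP).card := by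
    rw [Nat.card_eq_fintype_card, Fintype.card_subtype]
    have hfeq : (univ.filter fun a : (ZMod (∏ i, p i ^ α i))ˣ =>
        Even (orderOf a) ∧ ((a : ZMod (∏ i, p i ^ α i))) ^ (orderOf a / 2) ≠ -1)
        = univ \ (univ.filter badP) := by
      rw [← Finset.filter_not]
      apply Finset.filter_congr
      intro a _
      have hk := key a
      constructor
      · intro hg hb
        rcases hk.mp hb with h1 | h1
        · exact h1 hg.1
        · exact hg.2 h1
      · intro hnb
        by_cases hEven : Even (orderOf a)
        · refine ⟨hEven, fun hc => hnb (hk.mpr (Or.inr hc))⟩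
        · exact absurd (hk.mpr (Or.inl hEven)) hnb
    rw [hfeq, Finset.card_sdiff_of_subset (Finset.filter_subset _ _), Finset.card_univ]
  rw [hgood, Nat.card_eq_fintype_card]
  set n := Fintype.card (ZMod (∏ i, p i ^ α i))ˣ with hn
  set b := (univ.filter badP).card with hb
  have hble : b ≤ n := by
    rw [hb, hn, ← Finset.card_univ]
    exact Finset.card_filter_le _ _
  have hkey : 2 ^ (m - 1) * b ≤ n := by
    rw [hcardeq, hcardG]
    exact hprod
  have hn0 : 0 < n := Fintype.card_pos
  have hnQ : (0 : ℚ) < n := by exact_mod_cast hn0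
  have h2Q : (0 : ℚ) < 2 ^ (m - 1) := by positivity
  have hfrac : (b : ℚ) / n ≤ 1 / 2 ^ (m - 1) := by
    rw [div_le_div_iff₀ hnQ h2Q]
    have hcast : ((2 ^ (m - 1) * b : ℕ) : ℚ) ≤ (n : ℚ) := by exact_mod_cast hkey
    push_cast at hcast
    linarith
  have heq : ((n - b : ℕ) : ℚ) / n = 1 - (b : ℚ) / n := by
    rw [Nat.cast_sub hble]
    field_simp
  rw [ge_iff_le, heq]
  linarith
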